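/- For the quaternionic backward shift T on ℓ²(ℕ, H) (T e_1 = 0, T e_n = e_{n−1}), the quaternionic numerical range W(T) equals the open unit ball of H. -/
import Mathlib

open Quaternion

private lemma coe_tsum_mul (a : ℕ → ℝ) (ha : Summable a) (c : ℍ[ℝ]) :
    ∑' n, (a n : ℍ[ℝ]) * c = ((∑' n, a n : ℝ) : ℍ[ℝ]) * c := by
  have h := ha.hasSum.mapL (ContinuousLinearMap.toSpanSingleton ℝ c)
  simp only [ContinuousLinearMap.toSpanSingleton_apply] at h
  simp only [Quaternion.coe_mul_eq_smul]
  exact h.tsum_eq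

private lemma star_pow_mul_pow (q : ℍ[ℝ]) (n : ℕ) :
    (star q) ^ n * q ^ n = ((normSq q ^ n : ℝ) : ℍ[ℝ]) := by
  induction n with
  | zero => simp
  | succ n ih =>
    rw [pow_succ (star q), pow_succ' q, mul_assoc, ← mul_assoc (star q),
      Quaternion.star_mul_self, ← mul_assoc, ← Quaternion.coe_commutes,
      mul_assoc, ih, ← Quaternion.coe_mul, ← pow_succ']

set_option maxHeartbeats 1000000 in
/-- The quaternionic numerical range of the backward shift on `ℓ²(ℕ, ℍ)`
(with inner product `⟨x,y⟩ = ∑ yₙ* xₙ` and `(Tx)ₙ = x_{n+1}`) equals the open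
unit ball of the quaternions. -/
theorem numRange_backward_shift :
    {q : ℍ[ℝ] | ∃ x : ℕ → ℍ[ℝ], Summable (fun n => ‖x n‖ ^ 2) ∧
        (∑' n, star (x n) * x n) = 1 ∧ (∑' n, star (x n) * x (n + 1)) = q}
      = Metric.ball (0 : ℍ[ℝ]) 1 := by
  ext q
  simp only [Set.mem_setOf_eq, Metric.mem_ball, dist_zero_right]
  constructor
  · rintro ⟨x, hx, h1, h2⟩
    set a : ℕ → ℝ := fun n => ‖x n‖ with ha_def
    have ha_nn : ∀ n, 0 ≤ a n := fun n => norm_nonneg _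
    have ha2 : Summable (fun n => a n ^ 2) := hx
    have ha2' : Summable (fun n => a (n + 1) ^ 2) := (summable_nat_add_iff 1).2 hx
    -- the total sum of squares is 1
    have hcoe : ∀ n, star (x n) * x n = ((a n ^ 2 : ℝ) : ℍ[ℝ]) := by
      intro n
      rw [Quaternion.star_mul_self, Quaternion.normSq_eq_norm_mul_self, ← sq]
    have hsum1 : ∑' n, a n ^ 2 = 1 := by
      have hco := coe_tsum_mul (fun n => a n ^ 2) ha2 1
      simp only [mul_one] at hco
      apply Quaternion.coe_injective
      rw [Quaternion.coe_one, ← h1, ← hco]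
      exact tsum_congr fun n => (hcoe n).symm
    have hsum2 : ∑' n, a (n + 1) ^ 2 = 1 - a 0 ^ 2 := by
      have := Summable.tsum_eq_zero_add ha2
      rw [hsum1] at this; linarith
    -- summability of cross terms
    have hab : Summable (fun n => a n * a (n + 1)) := by
      apply Summable.of_nonneg_of_le (fun n => mul_nonneg (ha_nn n) (ha_nn (n + 1)))
        (fun n => ?_) ((ha2.add ha2').div_const 2)
      have h2ab := two_mul_le_add_sq (a n) (a (n + 1))
      show a n * a (n + 1) ≤ (a n ^ 2 + a (n + 1) ^ 2) / 2
      nlinarith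
    -- the difference sequence
    have hdd : (fun n => (a n - a (n + 1)) ^ 2)
        = fun n => (a n ^ 2 + a (n + 1) ^ 2) - 2 * (a n * a (n + 1)) := by
      funext n; ring
    have hd : Summable (fun n => (a n - a (n + 1)) ^ 2) := by
      rw [hdd]; exact (ha2.add ha2').sub (hab.mul_left 2)
    have htd : ∑' n, (a n - a (n + 1)) ^ 2
        = (1 + (1 - a 0 ^ 2)) - 2 * ∑' n, a n * a (n + 1) := by
      rw [hdd, Summable.tsum_sub (ha2.add ha2') (hab.mul_left 2), Summable.tsum_add ha2 ha2',
        hsum1, hsum2, tsum_mul_left]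
    -- positivity of the defect
    have hpos : 0 < a 0 ^ 2 + ∑' n, (a n - a (n + 1)) ^ 2 := by
      rcases lt_or_eq_of_le (sq_nonneg (a 0)) with h | h
      · have : (0:ℝ) ≤ ∑' n, (a n - a (n + 1)) ^ 2 :=
          tsum_nonneg fun n => sq_nonneg _
        linarith
      · have ha0 : a 0 = 0 := by nlinarith [sq_nonneg (a 0)]
        rcases lt_or_eq_of_le (tsum_nonneg (fun n => sq_nonneg (a n - a (n + 1)))) with h' | h'
        · nlinarith
        · exfalso
          have hall : ∀ n, (a n - a (n + 1)) ^ 2 = 0 := by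
            intro n
            have h1' := Summable.le_tsum hd n (fun m _ => sq_nonneg _)
            have := sq_nonneg (a n - a (n + 1))
            linarith
          have hzero : ∀ n, a n = 0 := by
            intro n
            induction n with
            | zero => exact ha0
            | succ k ih =>
              have := hall k
              have : a k - a (k + 1) = 0 := by
                have := sq_eq_zero_iff.mp (hall k); exact this
              linarith [ih]
          have : ∑' n, a n ^ 2 = 0 := by
            simp only [hzero]; simp
          rw [hsum1] at this; norm_num at this
    -- the bound
    have hS : ∑' n, a n * a (n + 1) < 1 := by linarith
    have hnorm : ‖q‖ ≤ ∑' n, a n * a (n + 1) := by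
      rw [← h2]
      have heq : (fun n => ‖star (x n) * x (n + 1)‖) = fun n => a n * a (n + 1) := by
        funext n; rw [norm_mul, Quaternion.norm_star]
      calc ‖∑' n, star (x n) * x (n + 1)‖ ≤ ∑' n, ‖star (x n) * x (n + 1)‖ :=
            norm_tsum_le_tsum_norm (by rw [heq]; exact hab)
        _ = ∑' n, a n * a (n + 1) := by rw [heq]
    linarith
  · intro hq
    set m : ℝ := normSq q with hm_def
    have hm0 : 0 ≤ m := normSq_nonneg
    have hm1 : m < 1 := by
      rw [hm_def, Quaternion.normSq_eq_norm_mul_self]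
      nlinarith [norm_nonneg q]
    have h1m : (0:ℝ) ≤ 1 - m := by linarith
    set c : ℍ[ℝ] := ((Real.sqrt (1 - m) : ℝ) : ℍ[ℝ]) with hc_def
    have hcc : c * c = (((1 - m) : ℝ) : ℍ[ℝ]) := by
      rw [hc_def, ← Quaternion.coe_mul, Real.mul_self_sqrt h1m]
    set x : ℕ → ℍ[ℝ] := fun n => c * q ^ n with hx_def
    have key : ∀ n k : ℕ, star (x n) * x k
        = (((1 - m) : ℝ) : ℍ[ℝ]) * ((star q) ^ n * q ^ k) := by
      intro n k
      rw [hx_def]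
      simp only
      rw [star_mul, hc_def, Quaternion.star_coe, star_pow, ← hc_def]
      calc (star q) ^ n * c * (c * q ^ k)
          = (star q) ^ n * (c * c) * q ^ k := by
            rw [mul_assoc, ← mul_assoc c c, ← mul_assoc]
        _ = (((1 - m) : ℝ) : ℍ[ℝ]) * ((star q) ^ n * q ^ k) := by
            rw [hcc, ← Quaternion.coe_commutes, mul_assoc]
    have key1 : ∀ n : ℕ, star (x n) * x n = (((1 - m) * m ^ n : ℝ) : ℍ[ℝ]) := by
      intro n
      rw [key n n, star_pow_mul_pow, ← Quaternion.coe_mul, ← hm_def]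
    have key2 : ∀ n : ℕ, star (x n) * x (n + 1)
        = (((1 - m) * m ^ n : ℝ) : ℍ[ℝ]) * q := by
      intro n
      rw [key n (n + 1), pow_succ q, ← mul_assoc (star q ^ n), star_pow_mul_pow,
        ← hm_def, ← mul_assoc, ← Quaternion.coe_mul]
    have hgeo : Summable (fun n => (1 - m) * m ^ n) :=
      (summable_geometric_of_lt_one hm0 hm1).mul_left _
    have hgeo_sum : ∑' n, (1 - m) * m ^ n = 1 := by
      rw [tsum_mul_left, tsum_geometric_of_lt_one hm0 hm1]
      exact mul_inv_cancel₀ (by linarith)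
    refine ⟨x, ?_, ?_, ?_⟩
    · have : (fun n => ‖x n‖ ^ 2) = fun n => (1 - m) * m ^ n := by
        funext n
        rw [hx_def]
        simp only
        rw [norm_mul, mul_pow, norm_pow, hc_def, Quaternion.norm_coe, Real.norm_eq_abs, sq_abs,
          Real.sq_sqrt h1m]
        congr 1
        rw [← pow_mul, mul_comm n 2, pow_mul, sq, ← Quaternion.normSq_eq_norm_mul_self,
          ← hm_def]
      rw [this]
      exact hgeo
    · simp only [key1]
      have := coe_tsum_mul (fun n => (1 - m) * m ^ n) hgeo 1
      simp only [mul_one] at this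
      rw [this, hgeo_sum, Quaternion.coe_one]
    · simp only [key2]
      rw [coe_tsum_mul (fun n => (1 - m) * m ^ n) hgeo q, hgeo_sum, Quaternion.coe_one,
        one_mul]
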